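/- Let n ≥ 1, let F : (Fin n → ℝ) × ℝ → ℝ be differentiable with a symmetry vector field w : (Fin n → ℝ) × ℝ → (Fin n → ℝ) × ℝ satisfying ⟪w(p), ∇F(p)⟫ = 0 for all p, and let h : (Fin n → ℝ) → ℝ be differentiable with gauge-fixing function G(x, φ) = h(x) − φ. Suppose (x₀, y₀, λ) ∈ (Fin n → ℝ) × ℝ × ℝ is a critical point of the extended function (x, y, λ) ↦ F(x, y) + λ (h(x) − y), and suppose ⟪w(x₀, y₀), ∇G(x₀, y₀)⟫ ≠ 0. Then λ = 0, y₀ = h(x₀), and ∇F(x₀, y₀) = 0. -/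

import Mathlib

/-- Finite-dimensional form of the paper's claim that the Lagrange multiplier
enforcing a derivative-free gauge fixing vanishes on-shell: let `F` be a
differentiable "action" on `(Fin n → ℝ) × ℝ` with a symmetry vector field `w`
(the directional derivative of `F` along `w`, i.e. `⟪w(p), ∇F(p)⟫`, vanishes
everywhere) and let `G(x, φ) = h(x) - φ` be the gauge-fixing function. If
`(x₀, y₀, λ)` is a critical point of the extended function
`(x, y, λ) ↦ F(x, y) + λ (h(x) - y)` and the symmetry is transverse to the gauge
fixing at `(x₀, y₀)` (i.e. `⟪w(x₀, y₀), ∇G(x₀, y₀)⟫ ≠ 0`), then `λ = 0`,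
`y₀ = h(x₀)`, and `(x₀, y₀)` is an unconstrained critical point of `F`
(`∇F(x₀, y₀) = 0`, equivalently its Fréchet derivative vanishes there). -/
theorem lagrange_multiplier_vanishes_on_shell
    (n : ℕ) (hn : 1 ≤ n)
    (F : ((Fin n → ℝ) × ℝ) → ℝ) (hF : Differentiable ℝ F)
    (w : ((Fin n → ℝ) × ℝ) → ((Fin n → ℝ) × ℝ))
    (hsym : ∀ p, fderiv ℝ F p (w p) = 0)
    (h : (Fin n → ℝ) → ℝ) (hh : Differentiable ℝ h)
    (G : ((Fin n → ℝ) × ℝ) → ℝ) (hG : G = fun p => h p.1 - p.2)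
    (x₀ : Fin n → ℝ) (y₀ lam : ℝ)
    (hcrit : fderiv ℝ
        (fun p : ((Fin n → ℝ) × ℝ) × ℝ => F p.1 + p.2 * (h p.1.1 - p.1.2))
        ((x₀, y₀), lam) = 0)
    (htrans : fderiv ℝ G (x₀, y₀) (w (x₀, y₀)) ≠ 0) :
    lam = 0 ∧ y₀ = h x₀ ∧ fderiv ℝ F (x₀, y₀) = 0 := by
  subst hG
  set p₀ : (Fin n → ℝ) × ℝ := (x₀, y₀) with hp₀
  have hGd : Differentiable ℝ (fun p : (Fin n → ℝ) × ℝ => h p.1 - p.2) :=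
    (hh.comp differentiable_fst).sub differentiable_snd
  set A := fderiv ℝ F p₀ with hA
  set B := fderiv ℝ (fun p : (Fin n → ℝ) × ℝ => h p.1 - p.2) p₀ with hB
  have h1 : HasFDerivAt (fun q : ((Fin n → ℝ) × ℝ) × ℝ => F q.1)
      (A.comp (ContinuousLinearMap.fst ℝ _ ℝ)) (p₀, lam) :=
    ((hF p₀).hasFDerivAt).comp (p₀, lam) (hasFDerivAt_fst)
  have h2 : HasFDerivAt (fun q : ((Fin n → ℝ) × ℝ) × ℝ => h q.1.1 - q.1.2)
      (B.comp (ContinuousLinearMap.fst ℝ _ ℝ)) (p₀, lam) :=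
    by have := ((hGd p₀).hasFDerivAt).comp (p₀, lam) (hasFDerivAt_fst (𝕜 := ℝ) (p := (p₀, lam))); exact this
  have h3 : HasFDerivAt (fun q : ((Fin n → ℝ) × ℝ) × ℝ => q.2 * (h q.1.1 - q.1.2))
      (lam • (B.comp (ContinuousLinearMap.fst ℝ _ ℝ))
        + (h p₀.1 - p₀.2) • (ContinuousLinearMap.snd ℝ _ ℝ)) (p₀, lam) :=
    (hasFDerivAt_snd).mul h2
  have htot := h1.add h3
  have hL : (A.comp (ContinuousLinearMap.fst ℝ _ ℝ)
      + (lam • (B.comp (ContinuousLinearMap.fst ℝ _ ℝ))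
        + (h p₀.1 - p₀.2) • (ContinuousLinearMap.snd ℝ _ ℝ))) = 0 := by
    rw [← htot.fderiv]; exact hcrit
  have hval : ∀ v : ((Fin n → ℝ) × ℝ) × ℝ,
      A v.1 + (lam * B v.1 + (h p₀.1 - p₀.2) * v.2) = 0 := by
    intro v
    have := congrFun (congrArg (fun (L : ((Fin n → ℝ) × ℝ) × ℝ →L[ℝ] ℝ) => (L : _ → ℝ)) hL) v
    simpa using this
  have hy : y₀ = h x₀ := by
    have := hval ((0, 0), 1)
    simp [Prod.mk_zero_zero] at this
    linarith
  have hG0 : h p₀.1 - p₀.2 = 0 := by simp [hp₀, hy]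
  have hlam : lam = 0 := by
    have := hval (w p₀, 0)
    rw [hG0] at this
    have hA0 : A (w p₀) = 0 := hsym p₀
    rw [hA0] at this
    simp at this
    rcases this with h' | h'
    · exact h'
    · exact absurd h' htrans
  refine ⟨hlam, hy, ?_⟩
  refine ContinuousLinearMap.ext fun v => ?_
  have := hval (v, 0)
  rw [hG0, hlam] at this
  simpa using this
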